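/- Let E be a finite-dimensional real inner product space, F a real vector space, and Φ : E → E → F a symmetric bilinear map (Φ(X,Y) = Φ(Y,X)) such that Φ(X,Y) = 0 whenever ⟨X,Y⟩ = 0. Then there exists H ∈ F such that Φ(X,Y) = ⟨X,Y⟩ · H for all X, Y ∈ E. -/

import Mathlib

/-- A symmetric bilinear map Φ vanishing on orthogonal pairs is
of the form Φ(X,Y) = ⟨X,Y⟩·H (umbilicity lemma, pointwise form). -/
theorem stmt_10 (E : Type*) [NormedAddCommGroup E] [InnerProductSpace ℝ E]
    [FiniteDimensional ℝ E]
    (F : Type*) [AddCommGroup F] [Module ℝ F]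
    (Φ : E →ₗ[ℝ] E →ₗ[ℝ] F)
    (hsymm : ∀ X Y : E, Φ X Y = Φ Y X)
    (horth : ∀ X Y : E, (inner ℝ X Y : ℝ) = 0 → Φ X Y = 0) :
    ∃ H : F, ∀ X Y : E, Φ X Y = (inner ℝ X Y : ℝ) • H := by
  by_cases hE : Subsingleton E
  · refine ⟨0, fun X Y => ?_⟩
    rw [Subsingleton.elim X 0]
    simp
  · have : Nontrivial E := not_subsingleton_iff_nontrivial.mp hE
    obtain ⟨x, hx⟩ := exists_ne (0 : E)
    have hxn : ‖x‖ ≠ 0 := norm_ne_zero_iff.mpr hx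
    obtain ⟨e, he⟩ : ∃ e : E, ‖e‖ = 1 :=
      ⟨‖x‖⁻¹ • x, by rw [norm_smul]; simp [hxn]⟩
    -- orthogonal unit vectors have equal diagonal
    have key : ∀ u v : E, ‖u‖ = 1 → ‖v‖ = 1 → (inner ℝ u v : ℝ) = 0 → Φ u u = Φ v v := by
      intro u v hu hv huv
      have h0 : (inner ℝ (u + v) (u - v) : ℝ) = 0 := by
        have h1 : (inner ℝ u u : ℝ) = 1 := by
          rw [real_inner_self_eq_norm_sq, hu]; norm_num
        have h2 : (inner ℝ v v : ℝ) = 1 := by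
          rw [real_inner_self_eq_norm_sq, hv]; norm_num
        have h3 : (inner ℝ v u : ℝ) = 0 := by rw [real_inner_comm]; exact huv
        simp [inner_add_left, inner_sub_right, h1, h2, h3, huv, hu, hv]
      have h := horth _ _ h0
      simp only [map_add, map_sub, LinearMap.add_apply, LinearMap.sub_apply] at h
      rw [hsymm v u] at h
      have h' : Φ u u - Φ v v = 0 := by rw [← h]; abel
      exact sub_eq_zero.mp h'
    -- diagonal values
    have diag : ∀ X : E, Φ X X = (inner ℝ X X : ℝ) • Φ e e := by
      intro X
      have hee : (inner ℝ e e : ℝ) = 1 := by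
        rw [real_inner_self_eq_norm_sq, he]; norm_num
      set a : ℝ := (inner ℝ e X : ℝ) with ha_def
      have hwe : (inner ℝ e (X - a • e) : ℝ) = 0 := by
        rw [inner_sub_right, real_inner_smul_right, hee]
        ring
      obtain ⟨w, hw_def⟩ : ∃ w : E, w = X - a • e := ⟨_, rfl⟩
      have hwe : (inner ℝ e w : ℝ) = 0 := by rw [hw_def]; exact hwe
      have hew : (inner ℝ w e : ℝ) = 0 := by rw [real_inner_comm]; exact hwe
      have hX : X = a • e + w := by rw [hw_def]; abel
      have hww : Φ w w = (inner ℝ w w : ℝ) • Φ e e := by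
        by_cases hw : w = 0
        · simp [hw]
        · have hwn : ‖w‖ ≠ 0 := norm_ne_zero_iff.mpr hw
          have hv : ‖(‖w‖⁻¹ • w)‖ = 1 := by rw [norm_smul]; simp [hwn]
          have hev : (inner ℝ e (‖w‖⁻¹ • w) : ℝ) = 0 := by
            rw [real_inner_smul_right, hwe]; ring
          have hk := key e (‖w‖⁻¹ • w) he hv hev
          have h2 : Φ (‖w‖⁻¹ • w) (‖w‖⁻¹ • w) = (‖w‖⁻¹ * ‖w‖⁻¹) • Φ w w := by
            simp [smul_smul]
          rw [h2] at hk
          have h3 := congrArg (fun z => (‖w‖ * ‖w‖) • z) hk.symm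
          simp only [smul_smul] at h3
          rw [show (‖w‖ * ‖w‖) * (‖w‖⁻¹ * ‖w‖⁻¹) = 1 by field_simp, one_smul] at h3
          rw [h3, real_inner_self_eq_norm_sq]
          ring_nf
      have hXw : (inner ℝ X X : ℝ) = a * a + inner ℝ w w := by
        conv_lhs => rw [hX]
        simp only [inner_add_left, inner_add_right, real_inner_smul_left,
          real_inner_smul_right, hee, hwe, hew]
        ring
      have hXX : Φ X X = (a * a) • Φ e e + Φ w w := by
        conv_lhs => rw [hX]
        simp only [map_add, map_smul, LinearMap.add_apply, LinearMap.smul_apply,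
          horth e w hwe, horth w e hew, smul_zero, add_zero, zero_add, smul_smul]
      rw [hXX, hww, hXw, add_smul]
    refine ⟨Φ e e, fun X Y => ?_⟩
    have hexp := diag (X + Y)
    simp only [map_add, LinearMap.add_apply] at hexp
    rw [diag X, diag Y, hsymm Y X] at hexp
    have hin : (inner ℝ (X + Y) (X + Y) : ℝ)
        = inner ℝ X X + 2 * inner ℝ X Y + inner ℝ Y Y := by
      rw [inner_add_left, inner_add_right, inner_add_right, real_inner_comm Y X]
      ring
    rw [hin, add_smul, add_smul] at hexp
    have h2 : Φ X Y + Φ X Y = (2 * (inner ℝ X Y : ℝ)) • Φ e e := by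
      calc Φ X Y + Φ X Y
          = ((inner ℝ X X : ℝ) • Φ e e + Φ X Y + (Φ X Y + (inner ℝ Y Y : ℝ) • Φ e e))
            - (inner ℝ X X : ℝ) • Φ e e - (inner ℝ Y Y : ℝ) • Φ e e := by abel
        _ = ((inner ℝ X X : ℝ) • Φ e e + (2 * (inner ℝ X Y : ℝ)) • Φ e e
            + (inner ℝ Y Y : ℝ) • Φ e e)
            - (inner ℝ X X : ℝ) • Φ e e - (inner ℝ Y Y : ℝ) • Φ e e := by rw [hexp]
        _ = (2 * (inner ℝ X Y : ℝ)) • Φ e e := by abel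
    have h3 : (2 : ℝ) • Φ X Y = (2 * (inner ℝ X Y : ℝ)) • Φ e e := by
      rw [two_smul]; exact h2
    have h4 := congrArg (fun z => (2⁻¹ : ℝ) • z) h3
    simp only [smul_smul] at h4
    rw [show (2⁻¹ : ℝ) * 2 = 1 by norm_num, one_smul,
      show (2⁻¹ : ℝ) * (2 * (inner ℝ X Y : ℝ)) = inner ℝ X Y by ring] at h4
    exact h4
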